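/- arXiv:2310.00425 — 2 statements merged into one kernel-verified Lean document; each statement's English description precedes it below -/
import Mathlib

section
/- For k ≥ 1, the bilinear operator T_k(f,g)(x) = sup_{t>0} ∫_{2^{-k-1}}^{2^{-k}} |f(x-ty)| |g(x-t√(1-y²))| dy on ℝ satisfies the pointwise bound T_k(f,g)(x) ≲ 2^{k/3} M_3 f(x) · M_{3/2} g(x) for a.e. x, where M_r h = (M(|h|^r))^{1/r} and M is the Hardy–Littlewood maximal operator. -/
open MeasureTheory Set
open scoped ENNReal

noncomputable section

/-- `Mr r h` : the `r`-th Hardy–Littlewood maximal function `(M(|h|^r))^{1/r}` on `ℝ`,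
defined via centered intervals. -/
def Mr (r : ℝ) (h : ℝ → ℝ) (x : ℝ) : ℝ≥0∞ :=
  (⨆ (t : ℝ) (_ : 0 < t), ENNReal.ofReal (1 / (2 * t)) *
    ∫⁻ y in Set.Ioo (x - t) (x + t), ENNReal.ofReal (|h y| ^ r)) ^ (1 / r)

/-- The dyadic piece `T_k` of the one-dimensional bilinear spherical maximal function. -/
def Tk (k : ℕ) (f g : ℝ → ℝ) (x : ℝ) : ℝ≥0∞ :=
  ⨆ (t : ℝ) (_ : 0 < t),
    ∫⁻ y in Set.Ioc ((2 : ℝ) ^ (-(k : ℝ) - 1)) ((2 : ℝ) ^ (-(k : ℝ))),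
      ENNReal.ofReal |f (x - t * y)| * ENNReal.ofReal |g (x - t * Real.sqrt (1 - y ^ 2))|

lemma myCOV {s : Set ℝ} {φ D : ℝ → ℝ} (hs : MeasurableSet s)
    (hφ' : ∀ y ∈ s, HasDerivWithinAt φ (D y) s y) (hinj : InjOn φ s) (H : ℝ → ℝ≥0∞) :
    ∫⁻ v in φ '' s, H v = ∫⁻ y in s, ENNReal.ofReal |D y| * H (φ y) := by
  simpa only [ContinuousLinearMap.det_toSpanSingleton] using
    MeasureTheory.lintegral_image_eq_lintegral_abs_det_fderiv_mul volume hs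
      (fun y hy => (hφ' y hy).hasFDerivWithinAt) hinj H

lemma const_ineq (k : ℕ) : (4 * (2:ℝ)^(-(k:ℝ)))^((1:ℝ)/3) * (4 / (2:ℝ)^(-(k:ℝ)-1))^((2:ℝ)/3)
    ≤ 8 * 2^((k:ℝ)/3) := by
  have h2 : (0:ℝ) < 2 := two_pos
  have h4 : (4:ℝ) = 2^(2:ℝ) := by
    rw [show (2:ℝ) = ((2:ℕ):ℝ) from by norm_num, Real.rpow_natCast]; norm_num
  have h8 : (8:ℝ) = 2^(3:ℝ) := by
    rw [show (3:ℝ) = ((3:ℕ):ℝ) from by norm_num, Real.rpow_natCast]; norm_num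
  have e1 : 4 * (2:ℝ)^(-(k:ℝ)) = (2:ℝ)^((2:ℝ) - k) := by
    rw [h4, ← Real.rpow_add h2]; ring_nf
  have e2 : 4 / (2:ℝ)^(-(k:ℝ)-1) = (2:ℝ)^((k:ℝ)+3) := by
    rw [h4, ← Real.rpow_sub h2]; ring_nf
  rw [e1, e2, ← Real.rpow_mul h2.le, ← Real.rpow_mul h2.le, ← Real.rpow_add h2, h8,
    ← Real.rpow_add h2]
  apply Real.rpow_le_rpow_of_exponent_le one_le_two
  ring_nf
  linarith

lemma lint_le (r : ℝ) (hr : r ≠ 0) (h : ℝ → ℝ) (x ρ : ℝ) (hρ : 0 < ρ) :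
    ∫⁻ v in Ioo (x - ρ) (x + ρ), ENNReal.ofReal (|h v| ^ r) ≤
      ENNReal.ofReal (2 * ρ) * (Mr r h x) ^ r := by
  have hMr : (Mr r h x) ^ r = ⨆ (t : ℝ) (_ : 0 < t), ENNReal.ofReal (1 / (2 * t)) *
      ∫⁻ y in Set.Ioo (x - t) (x + t), ENNReal.ofReal (|h y| ^ r) := by
    rw [Mr, ← ENNReal.rpow_mul, one_div, inv_mul_cancel₀ hr, ENNReal.rpow_one]
  rw [hMr]
  have h1 : ENNReal.ofReal (1 / (2 * ρ)) *
      (∫⁻ v in Ioo (x - ρ) (x + ρ), ENNReal.ofReal (|h v| ^ r)) ≤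
      ⨆ (t : ℝ) (_ : 0 < t), ENNReal.ofReal (1 / (2 * t)) *
        ∫⁻ y in Set.Ioo (x - t) (x + t), ENNReal.ofReal (|h y| ^ r) :=
    le_iSup₂ (f := fun (t : ℝ) (_ : 0 < t) => ENNReal.ofReal (1 / (2 * t)) *
        ∫⁻ y in Set.Ioo (x - t) (x + t), ENNReal.ofReal (|h y| ^ r)) ρ hρ
  have h2 : ENNReal.ofReal (2 * ρ) * ENNReal.ofReal (1 / (2 * ρ)) = 1 := by
    rw [← ENNReal.ofReal_mul (by positivity), mul_one_div, div_self (by positivity),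
      ENNReal.ofReal_one]
  calc ∫⁻ v in Ioo (x - ρ) (x + ρ), ENNReal.ofReal (|h v| ^ r)
      = (ENNReal.ofReal (2 * ρ) * ENNReal.ofReal (1 / (2 * ρ))) *
        ∫⁻ v in Ioo (x - ρ) (x + ρ), ENNReal.ofReal (|h v| ^ r) := by rw [h2, one_mul]
    _ = ENNReal.ofReal (2 * ρ) * (ENNReal.ofReal (1 / (2 * ρ)) *
        ∫⁻ v in Ioo (x - ρ) (x + ρ), ENNReal.ofReal (|h v| ^ r)) := by rw [mul_assoc]
    _ ≤ _ := mul_le_mul_right h1 _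

lemma Fbound (x t : ℝ) (ht : 0 < t) (f : ℝ → ℝ) (a b : ℝ) (ha : 0 < a) (hab : a ≤ b) :
    ∫⁻ y in Ioc a b, ENNReal.ofReal |f (x - t * y)| ^ (3:ℝ)
      ≤ ENNReal.ofReal (4 * b) * (Mr 3 f x) ^ (3:ℝ) := by
  have hb : 0 < b := ha.trans_le hab
  have hψ : ∀ y ∈ Ioc a b, HasDerivWithinAt (fun z => x - t * z) (-t) (Ioc a b) y := by
    intro y _
    simpa using (((hasDerivAt_id y).const_mul t).const_sub x).hasDerivWithinAt
  have hinj : InjOn (fun z => x - t * z) (Ioc a b) := by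
    intro y1 _ y2 _ h
    simp only at h
    have h' : t * y1 = t * y2 := by linarith
    exact mul_left_cancel₀ ht.ne' h'
  have key := myCOV measurableSet_Ioc hψ hinj (fun v => ENNReal.ofReal (|f v| ^ (3:ℝ)))
  rw [lintegral_const_mul' _ _ ENNReal.ofReal_ne_top] at key
  rw [show |(-t)| = t from by rw [abs_neg, abs_of_pos ht]] at key
  have hsub : (fun z => x - t * z) '' (Ioc a b) ⊆ Ioo (x - 2*t*b) (x + 2*t*b) := by
    rintro _ ⟨y, hy, rfl⟩
    constructor
    · simp only; nlinarith [hy.1, hy.2]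
    · simp only; nlinarith [hy.1, hy.2]
  have step : ENNReal.ofReal t * ∫⁻ y in Ioc a b, ENNReal.ofReal (|f (x - t*y)| ^ (3:ℝ))
      ≤ ENNReal.ofReal (2 * (2*t*b)) * (Mr 3 f x) ^ (3:ℝ) := by
    rw [← key]
    exact le_trans (lintegral_mono_set hsub) (lint_le 3 (by norm_num) f x (2*t*b) (by positivity))
  have hpow : ∀ y : ℝ, ENNReal.ofReal |f (x - t*y)| ^ (3:ℝ)
      = ENNReal.ofReal (|f (x - t*y)| ^ (3:ℝ)) := fun y =>
    ENNReal.ofReal_rpow_of_nonneg (abs_nonneg _) (by norm_num)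
  simp only [hpow]
  calc ∫⁻ y in Ioc a b, ENNReal.ofReal (|f (x - t*y)| ^ (3:ℝ))
      = (ENNReal.ofReal (1/t) * ENNReal.ofReal t) *
        ∫⁻ y in Ioc a b, ENNReal.ofReal (|f (x - t*y)| ^ (3:ℝ)) := by
        rw [← ENNReal.ofReal_mul (by positivity), one_div_mul_cancel ht.ne',
          ENNReal.ofReal_one, one_mul]
    _ = ENNReal.ofReal (1/t) * (ENNReal.ofReal t *
        ∫⁻ y in Ioc a b, ENNReal.ofReal (|f (x - t*y)| ^ (3:ℝ))) := by rw [mul_assoc]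
    _ ≤ ENNReal.ofReal (1/t) * (ENNReal.ofReal (2*(2*t*b)) * (Mr 3 f x) ^ (3:ℝ)) :=
        mul_le_mul_right step _
    _ = ENNReal.ofReal (4*b) * (Mr 3 f x) ^ (3:ℝ) := by
        rw [← mul_assoc, ← ENNReal.ofReal_mul (by positivity)]
        congr 2
        field_simp
        ring

lemma Gbound (x t : ℝ) (ht : 0 < t) (g : ℝ → ℝ) (a b : ℝ) (ha : 0 < a) (hab : a ≤ b)
    (hb2 : b ≤ 1/2) :
    ∫⁻ y in Ioc a b, ENNReal.ofReal |g (x - t * Real.sqrt (1 - y ^ 2))| ^ ((3:ℝ)/2)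
      ≤ ENNReal.ofReal (4 / a) * (Mr (3/2) g x) ^ ((3:ℝ)/2) := by
  set I := Ioc a b with hIdef
  set φ : ℝ → ℝ := fun z => x - t * Real.sqrt (1 - z ^ 2) with hφdef
  set D : ℝ → ℝ := fun z => t * z / Real.sqrt (1 - z ^ 2) with hDdef
  have hyfacts : ∀ y ∈ I, 0 < y ∧ y ≤ 1/2 ∧ (3:ℝ)/4 ≤ 1 - y^2 ∧
      0 < Real.sqrt (1 - y^2) ∧ Real.sqrt (1 - y^2) ≤ 1 := by
    intro y hy
    have h1 : 0 < y := ha.trans hy.1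
    have h2 : y ≤ 1/2 := hy.2.trans hb2
    have h3 : (3:ℝ)/4 ≤ 1 - y^2 := by nlinarith
    have h4 : 0 < Real.sqrt (1 - y^2) := Real.sqrt_pos.mpr (by linarith)
    have h5 : Real.sqrt (1 - y^2) ≤ 1 := by
      calc Real.sqrt (1 - y^2) ≤ Real.sqrt 1 := Real.sqrt_le_sqrt (by nlinarith)
        _ = 1 := Real.sqrt_one
    exact ⟨h1, h2, h3, h4, h5⟩
  have hφ' : ∀ y ∈ I, HasDerivWithinAt φ (D y) I y := by
    intro y hy
    obtain ⟨hy0, hyh, h34, hsp, hs1⟩ := hyfacts y hy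
    have hne : (1:ℝ) - y^2 ≠ 0 := by linarith
    have h1 : HasDerivAt (fun z : ℝ => 1 - z ^ 2) (-(2*y)) y := by
      simpa using ((hasDerivAt_pow 2 y).const_sub 1)
    have h2 : HasDerivAt (fun z : ℝ => Real.sqrt (1 - z ^ 2))
        (1/(2*Real.sqrt (1 - y^2)) * (-(2*y))) y := (Real.hasDerivAt_sqrt hne).comp y h1
    have h3 := (h2.const_mul t).const_sub x
    have heq : D y = -(t * (1/(2*Real.sqrt (1 - y^2)) * (-(2*y)))) := by
      simp only [hDdef]
      have hs : Real.sqrt (1 - y^2) ≠ 0 := ne_of_gt hsp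
      field_simp
    rw [heq]
    exact h3.hasDerivWithinAt
  have hinj : InjOn φ I := by
    intro y1 h1 y2 h2 he
    obtain ⟨h10, _, h13, _, _⟩ := hyfacts y1 h1
    obtain ⟨h20, _, h23, _, _⟩ := hyfacts y2 h2
    have hsq : Real.sqrt (1 - y1^2) = Real.sqrt (1 - y2^2) := by
      have h' : t * Real.sqrt (1 - y1^2) = t * Real.sqrt (1 - y2^2) := by
        simp only [hφdef] at he; linarith
      exact mul_left_cancel₀ ht.ne' h'
    have h12 : 1 - y1^2 = 1 - y2^2 := by
      have e1 := Real.sq_sqrt (show (0:ℝ) ≤ 1 - y1^2 by linarith)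
      have e2 := Real.sq_sqrt (show (0:ℝ) ≤ 1 - y2^2 by linarith)
      rw [← e1, ← e2, hsq]
    have hz : (y1 - y2) * (y1 + y2) = 0 := by nlinarith
    rcases mul_eq_zero.mp hz with h | h
    · linarith
    · linarith
  have key := myCOV measurableSet_Ioc hφ' hinj (fun v => ENNReal.ofReal (|g v| ^ ((3:ℝ)/2)))
  have hpt : ∀ y ∈ I, ENNReal.ofReal (|g (φ y)| ^ ((3:ℝ)/2)) ≤
      ENNReal.ofReal (1/(t*a)) *
        (ENNReal.ofReal |D y| * ENNReal.ofReal (|g (φ y)| ^ ((3:ℝ)/2))) := by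
    intro y hy
    obtain ⟨hy0, hyh, h34, hsp, hs1⟩ := hyfacts y hy
    have hD : t * a ≤ |D y| := by
      have hDpos : 0 ≤ D y := by
        simp only [hDdef]; positivity
      rw [abs_of_nonneg hDpos]
      simp only [hDdef]
      rw [le_div_iff₀ hsp]
      have hay : a < y := hy.1
      have e1 : t * a * Real.sqrt (1 - y^2) ≤ t * a * 1 :=
        mul_le_mul_of_nonneg_left hs1 (by positivity)
      have e2 : t * a ≤ t * y := mul_le_mul_of_nonneg_left hay.le ht.le
      linarith
    have h1 : (1:ℝ≥0∞) ≤ ENNReal.ofReal (1/(t*a)) * ENNReal.ofReal |D y| := by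
      calc (1:ℝ≥0∞) = ENNReal.ofReal (1/(t*a)) * ENNReal.ofReal (t*a) := by
            rw [← ENNReal.ofReal_mul (by positivity), one_div_mul_cancel (by positivity),
              ENNReal.ofReal_one]
        _ ≤ _ := mul_le_mul_right (ENNReal.ofReal_le_ofReal hD) _
    calc ENNReal.ofReal (|g (φ y)| ^ ((3:ℝ)/2))
        = 1 * ENNReal.ofReal (|g (φ y)| ^ ((3:ℝ)/2)) := (one_mul _).symm
      _ ≤ (ENNReal.ofReal (1/(t*a)) * ENNReal.ofReal |D y|) *
          ENNReal.ofReal (|g (φ y)| ^ ((3:ℝ)/2)) := mul_le_mul_left h1 _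
      _ = _ := by rw [mul_assoc]
  have hsub : φ '' I ⊆ Ioo (x - 2*t) (x + 2*t) := by
    rintro _ ⟨y, hy, rfl⟩
    obtain ⟨hy0, hyh, h34, hsp, hs1⟩ := hyfacts y hy
    refine ⟨?_, ?_⟩
    · simp only [hφdef]; nlinarith
    · simp only [hφdef]; nlinarith
  have hpow : ∀ y : ℝ, ENNReal.ofReal |g (x - t * Real.sqrt (1 - y ^ 2))| ^ ((3:ℝ)/2)
      = ENNReal.ofReal (|g (φ y)| ^ ((3:ℝ)/2)) := fun y =>
    ENNReal.ofReal_rpow_of_nonneg (abs_nonneg _) (by norm_num)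
  calc ∫⁻ y in I, ENNReal.ofReal |g (x - t * Real.sqrt (1 - y ^ 2))| ^ ((3:ℝ)/2)
      = ∫⁻ y in I, ENNReal.ofReal (|g (φ y)| ^ ((3:ℝ)/2)) := by simp only [hpow]
    _ ≤ ∫⁻ y in I, ENNReal.ofReal (1/(t*a)) *
          (ENNReal.ofReal |D y| * ENNReal.ofReal (|g (φ y)| ^ ((3:ℝ)/2))) :=
        setLIntegral_mono' measurableSet_Ioc hpt
    _ = ENNReal.ofReal (1/(t*a)) * ∫⁻ y in I,
          ENNReal.ofReal |D y| * ENNReal.ofReal (|g (φ y)| ^ ((3:ℝ)/2)) :=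
        lintegral_const_mul' _ _ ENNReal.ofReal_ne_top
    _ = ENNReal.ofReal (1/(t*a)) * ∫⁻ v in φ '' I, ENNReal.ofReal (|g v| ^ ((3:ℝ)/2)) := by
        rw [key]
    _ ≤ ENNReal.ofReal (1/(t*a)) * (ENNReal.ofReal (2*(2*t)) * (Mr (3/2) g x) ^ ((3:ℝ)/2)) := by
        apply mul_le_mul_right
        exact le_trans (lintegral_mono_set hsub) (lint_le (3/2) (by norm_num) g x (2*t) (by positivity))
    _ = ENNReal.ofReal (4 / a) * (Mr (3/2) g x) ^ ((3:ℝ)/2) := by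
        rw [← mul_assoc, ← ENNReal.ofReal_mul (by positivity)]
        congr 2
        field_simp
        ring

/-- `T_k(f,g)(x) ≲ 2^{k/3} M₃f(x) · M_{3/2}g(x)` with an absolute constant. -/
theorem stmt0 : ∃ C : ℝ, 0 < C ∧ ∀ (k : ℕ), 1 ≤ k → ∀ (f g : ℝ → ℝ),
    Measurable f → Measurable g →
    ∀ᵐ x : ℝ, Tk k f g x ≤
      ENNReal.ofReal (C * 2 ^ ((k : ℝ) / 3)) * (Mr 3 f x * Mr (3 / 2) g x) := by
  refine ⟨8, by norm_num, ?_⟩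
  intro k hk f g hf hg
  refine Filter.Eventually.of_forall fun x => ?_
  rw [Tk]
  refine iSup₂_le fun t ht => ?_
  set a := (2:ℝ)^(-(k:ℝ)-1) with hadef
  set b := (2:ℝ)^(-(k:ℝ)) with hbdef
  have ha : 0 < a := Real.rpow_pos_of_pos two_pos _
  have hb : 0 < b := Real.rpow_pos_of_pos two_pos _
  have hab : a ≤ b := Real.rpow_le_rpow_of_exponent_le one_le_two (by linarith)
  have hb2 : b ≤ 1/2 := by
    have h1 : ((2:ℝ))^(-(1:ℝ)) = 1/2 := by
      rw [Real.rpow_neg_one]; norm_num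
    rw [hbdef, ← h1]
    apply Real.rpow_le_rpow_of_exponent_le one_le_two
    have : (1:ℝ) ≤ (k:ℝ) := by exact_mod_cast hk
    linarith
  have hconj : Real.HolderConjugate 3 (3/2) := ⟨by norm_num, by norm_num, by norm_num⟩
  have hmF : AEMeasurable (fun y => ENNReal.ofReal |f (x - t * y)|)
      (volume.restrict (Ioc a b)) :=
    ((hf.comp (measurable_const.sub (measurable_id.const_mul t))).abs.ennreal_ofReal).aemeasurable
  have hmap2 : Measurable fun y : ℝ => x - t * Real.sqrt (1 - y ^ 2) :=
    (continuous_const.sub (continuous_const.mul (Real.continuous_sqrt.comp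
      (continuous_const.sub (continuous_pow 2))))).measurable
  have hmG : AEMeasurable (fun y => ENNReal.ofReal |g (x - t * Real.sqrt (1 - y ^ 2))|)
      (volume.restrict (Ioc a b)) :=
    ((hg.comp hmap2).abs.ennreal_ofReal).aemeasurable
  have holder := ENNReal.lintegral_mul_le_Lp_mul_Lq (volume.restrict (Ioc a b)) hconj hmF hmG
  simp only [Pi.mul_apply] at holder
  refine le_trans holder ?_
  have hF := Fbound x t ht f a b ha hab
  have hG := Gbound x t ht g a b ha hab hb2
  calc (∫⁻ y in Ioc a b, ENNReal.ofReal |f (x - t * y)| ^ (3:ℝ)) ^ ((1:ℝ)/3) *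
        (∫⁻ y in Ioc a b,
          ENNReal.ofReal |g (x - t * Real.sqrt (1 - y ^ 2))| ^ ((3:ℝ)/2)) ^ ((1:ℝ)/(3/2))
      ≤ (ENNReal.ofReal (4*b) * (Mr 3 f x) ^ (3:ℝ)) ^ ((1:ℝ)/3) *
        (ENNReal.ofReal (4/a) * (Mr (3/2) g x) ^ ((3:ℝ)/2)) ^ ((1:ℝ)/(3/2)) :=
        mul_le_mul' (ENNReal.rpow_le_rpow hF (by norm_num))
          (ENNReal.rpow_le_rpow hG (by norm_num))
    _ = (ENNReal.ofReal ((4*b) ^ ((1:ℝ)/3)) * ENNReal.ofReal ((4/a) ^ ((2:ℝ)/3))) *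
        (Mr 3 f x * Mr (3/2) g x) := by
        rw [show (1:ℝ)/(3/2) = 2/3 by norm_num,
          ENNReal.mul_rpow_of_nonneg _ _ (by norm_num : (0:ℝ) ≤ 1/3),
          ENNReal.mul_rpow_of_nonneg _ _ (by norm_num : (0:ℝ) ≤ 2/3),
          ← ENNReal.rpow_mul, ← ENNReal.rpow_mul,
          ENNReal.ofReal_rpow_of_nonneg (by positivity) (by norm_num : (0:ℝ) ≤ 1/3),
          ENNReal.ofReal_rpow_of_nonneg (by positivity) (by norm_num : (0:ℝ) ≤ 2/3)]
        norm_num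
        ring
    _ ≤ ENNReal.ofReal (8 * 2^((k:ℝ)/3)) * (Mr 3 f x * Mr (3/2) g x) := by
        apply mul_le_mul_left
        rw [← ENNReal.ofReal_mul (by positivity)]
        exact ENNReal.ofReal_le_ofReal (const_ineq k)
end
end

section
/- Lorentz norm of a lacunary sum of indicator bumps: let p₀ ∈ [1,∞), a > 0 small, N ∈ ℕ, and f(x) = Σ_{i=1}^N 4^{(d/p₀) i} χ_{B(0, a 4^{-i})}(x) on ℝ^d. Then for every s ∈ (1, ∞), ‖f‖_{L^{p₀,s}(ℝ^d)} ≲ N^{1/s}, with implied constant independent of N. -/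
open MeasureTheory Set
open scoped ENNReal

noncomputable section

/-- The Lorentz `L^{p,s}` (quasi-)norm on `ℝ^d`,
`‖f‖_{L^{p,s}} = p^{1/s} (∫_0^∞ (t d_f(t)^{1/p})^s dt/t)^{1/s}` where
`d_f(t) = |{|f| > t}|`. -/
def lorentzNorm (d : ℕ) (p s : ℝ) (f : EuclideanSpace ℝ (Fin d) → ℝ) : ℝ≥0∞ :=
  ENNReal.ofReal (p ^ (1 / s)) *
    (∫⁻ t in Set.Ioi (0 : ℝ),
      (ENNReal.ofReal t * (volume {x | t < |f x|}) ^ (1 / p)) ^ s *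
        ENNReal.ofReal (1 / t)) ^ (1 / s)

set_option maxHeartbeats 1000000 in
/-- the lacunary sum of indicator bumps
`f = ∑_{i=1}^N 4^{(d/p₀)i} χ_{B(0, a4^{-i})}` has Lorentz norm
`‖f‖_{L^{p₀,s}} ≲ N^{1/s}`, uniformly in `N`. -/
theorem stmt10 (d : ℕ) (hd : 1 ≤ d) (p₀ : ℝ) (hp : 1 ≤ p₀) (s : ℝ) (hs : 1 < s)
    (a : ℝ) (ha : 0 < a) (ha1 : a < 1) :
    ∃ C : ℝ, 0 < C ∧ ∀ N : ℕ,
      lorentzNorm d p₀ s (fun x => ∑ i ∈ Finset.Icc 1 N,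
          (4 : ℝ) ^ (((d : ℝ) / p₀) * i) *
            (Metric.ball (0 : EuclideanSpace ℝ (Fin d)) (a * 4 ^ (-(i : ℝ)))).indicator 1 x) ≤
        ENNReal.ofReal (C * (N : ℝ) ^ (1 / s)) := by
  classical
  have hp0 : (0:ℝ) < p₀ := lt_of_lt_of_le one_pos hp
  have hs0 : (0:ℝ) < s := lt_trans one_pos hs
  have hs0' : (0:ℝ) < 1/s := by positivity
  have hp0' : (0:ℝ) < 1/p₀ := by positivity
  set c : ℝ := (d:ℝ)/p₀ with hc_def
  have hc : 0 < c := by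
    apply div_pos _ hp0
    exact_mod_cast Nat.lt_of_lt_of_le Nat.zero_lt_one hd
  set b : ℝ := (4:ℝ) ^ c with hb_def
  have hb1 : 1 < b := by
    rw [hb_def, Real.one_lt_rpow_iff_of_pos (by norm_num)]
    exact Or.inl ⟨by norm_num, hc⟩
  have hb0 : 0 < b := lt_trans one_pos hb1
  set C₀ : ℝ := b / (b-1) with hC0_def
  have hC₀pos : 0 < C₀ := div_pos hb0 (by linarith)
  have hC₀1 : 1 ≤ C₀ := by
    rw [hC0_def, le_div_iff₀ (by linarith)]; linarith
  have hC₀key : C₀ + b = C₀ * b := by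
    have hb1' : b - 1 ≠ 0 := by linarith
    rw [hC0_def]; field_simp; ring
  set v : ℝ := (volume (Metric.ball (0 : EuclideanSpace ℝ (Fin d)) 1)).toReal with hv_def
  have hv0 : 0 ≤ v := ENNReal.toReal_nonneg
  have hvol : ∀ r : ℝ, 0 < r →
      volume (Metric.ball (0 : EuclideanSpace ℝ (Fin d)) r) = ENNReal.ofReal (r ^ d * v) := by
    intro r hr
    rw [Measure.addHaar_ball_of_pos volume (0 : EuclideanSpace ℝ (Fin d)) hr,
      finrank_euclideanSpace_fin, ENNReal.ofReal_mul (by positivity), hv_def,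
      ENNReal.ofReal_toReal (measure_ball_lt_top).ne]
  -- constants
  set B₂ : ℝ := ((a/4)^d * v) ^ (1/p₀) with hB2_def
  set B : ℝ := a ^ c * C₀ * v ^ (1/p₀) with hB_def
  have hB2nn : 0 ≤ B₂ := Real.rpow_nonneg (by positivity) _
  have hBnn : 0 ≤ B := by
    have h1 : (0:ℝ) ≤ a ^ c := Real.rpow_nonneg ha.le _
    have h2 : (0:ℝ) ≤ v ^ (1/p₀) := Real.rpow_nonneg hv0 _
    positivity
  set A : ℝ := B₂ ^ s + B ^ s * (Real.log C₀ + c * Real.log 4) with hA_def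
  have hlogC₀ : 0 ≤ Real.log C₀ := Real.log_nonneg hC₀1
  have hlog4 : 0 ≤ Real.log 4 := Real.log_nonneg (by norm_num)
  have hB2s : 0 ≤ B₂ ^ s := Real.rpow_nonneg hB2nn _
  have hBs : 0 ≤ B ^ s := Real.rpow_nonneg hBnn _
  have hA0 : 0 ≤ A := by positivity
  refine ⟨p₀ ^ (1/s) * A ^ (1/s) + 1, by positivity, ?_⟩
  intro N
  set f : EuclideanSpace ℝ (Fin d) → ℝ := fun x => ∑ i ∈ Finset.Icc 1 N,
      (4 : ℝ) ^ (((d : ℝ) / p₀) * i) *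
        (Metric.ball (0 : EuclideanSpace ℝ (Fin d)) (a * 4 ^ (-(i : ℝ)))).indicator 1 x
    with hf_def
  have hterm : ∀ (i : ℕ) (x : EuclideanSpace ℝ (Fin d)),
      (4 : ℝ) ^ (((d : ℝ) / p₀) * i) *
      (Metric.ball (0 : EuclideanSpace ℝ (Fin d)) (a * 4 ^ (-(i : ℝ)))).indicator 1 x =
      if ‖x‖ < a * 4 ^ (-(i:ℝ)) then b ^ i else 0 := by
    intro i x
    rw [Set.indicator_apply]
    have hmem : x ∈ Metric.ball (0 : EuclideanSpace ℝ (Fin d)) (a * 4 ^ (-(i:ℝ))) ↔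
        ‖x‖ < a * 4 ^ (-(i:ℝ)) := mem_ball_zero_iff
    have hpow : (4 : ℝ) ^ (((d : ℝ) / p₀) * i) = b ^ i := by
      rw [hb_def, ← Real.rpow_natCast ((4:ℝ)^c) i, ← Real.rpow_mul (by norm_num : (0:ℝ) ≤ 4),
        hc_def]
    rw [hpow]
    split_ifs with h1 h2 h2
    · simp
    · exact absurd (hmem.mp h1) h2
    · exact absurd (hmem.mpr h2) h1
    · simp
  have hf_eq : ∀ x, f x = ∑ i ∈ (Finset.Icc 1 N).filter
      (fun i : ℕ => ‖x‖ < a * 4 ^ (-(i:ℝ))), b ^ i := by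
    intro x
    simp only [hf_def]
    rw [Finset.sum_filter]
    exact Finset.sum_congr rfl fun i _ => hterm i x
  have hgeom : ∀ m : ℕ, ∑ i ∈ Finset.Icc 1 m, b ^ i ≤ C₀ * b ^ m := by
    intro m
    induction m with
    | zero => simp [hC₀pos.le]
    | succ m ih =>
      rw [Finset.sum_Icc_succ_top (Nat.one_le_iff_ne_zero.mpr (Nat.succ_ne_zero m))]
      have hbm : (0:ℝ) ≤ b ^ m := by positivity
      calc (∑ i ∈ Finset.Icc 1 m, b ^ i) + b ^ (m+1) ≤ C₀ * b ^ m + b ^ (m+1) := by linarith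
        _ = (C₀ + b) * b ^ m := by ring
        _ = C₀ * b ^ (m+1) := by rw [hC₀key]; ring
  have hfnonneg : ∀ x, 0 ≤ f x := by
    intro x
    rw [hf_eq x]
    exact Finset.sum_nonneg fun i _ => by positivity
  have habs : ∀ x, |f x| = f x := fun x => abs_of_nonneg (hfnonneg x)
  have hfle : ∀ x, f x ≤ C₀ * b ^ N := by
    intro x
    rw [hf_eq x]
    calc ∑ i ∈ (Finset.Icc 1 N).filter (fun i : ℕ => ‖x‖ < a * 4 ^ (-(i:ℝ))), b ^ i
        ≤ ∑ i ∈ Finset.Icc 1 N, b ^ i :=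
          Finset.sum_le_sum_of_subset_of_nonneg (Finset.filter_subset _ _)
            (fun i _ _ => by positivity)
      _ ≤ C₀ * b ^ N := hgeom N
  have hSne : ∀ (x : EuclideanSpace ℝ (Fin d)) (t : ℝ), 0 < t → t < f x →
      ((Finset.Icc 1 N).filter (fun i : ℕ => ‖x‖ < a * 4 ^ (-(i:ℝ)))).Nonempty := by
    intro x t ht hx
    by_contra h
    rw [Finset.not_nonempty_iff_eq_empty] at h
    rw [hf_eq x, h, Finset.sum_empty] at hx
    linarith
  have hsub1 : ∀ t : ℝ, 0 < t → {x | t < |f x|} ⊆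
      Metric.ball (0 : EuclideanSpace ℝ (Fin d)) (a/4) := by
    intro t ht x hx
    rw [mem_setOf_eq, habs] at hx
    obtain ⟨i, hi⟩ := hSne x t ht hx
    rw [Finset.mem_filter, Finset.mem_Icc] at hi
    have h1i : 1 ≤ i := hi.1.1
    have hle : a * 4 ^ (-(i:ℝ)) ≤ a / 4 := by
      have h2 : (4:ℝ) ^ (-(i:ℝ)) ≤ (4:ℝ) ^ (-(1:ℝ)) := by
        apply Real.rpow_le_rpow_of_exponent_le (by norm_num)
        have : (1:ℝ) ≤ (i:ℝ) := by exact_mod_cast h1i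
        linarith
      have h4 : (4:ℝ) ^ (-(1:ℝ)) = 1/4 := by
        rw [Real.rpow_neg_one]; norm_num
      rw [h4] at h2
      nlinarith
    rw [mem_ball_zero_iff]
    linarith [hi.2]
  have hsub2 : ∀ t : ℝ, 0 < t → {x | t < |f x|} ⊆
      Metric.ball (0 : EuclideanSpace ℝ (Fin d)) (a / (t/C₀) ^ (1/c)) := by
    intro t ht x hx
    rw [mem_setOf_eq, habs] at hx
    have hy : 0 < (t/C₀) ^ (1/c) := Real.rpow_pos_of_pos (div_pos ht hC₀pos) _
    have hrpos : 0 < a / (t/C₀) ^ (1/c) := div_pos ha hy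
    rcases eq_or_ne x 0 with h0 | h0
    · rw [h0]; exact Metric.mem_ball_self hrpos
    · have hxn : 0 < ‖x‖ := norm_pos_iff.mpr h0
      obtain hS := hSne x t ht hx
      set S := (Finset.Icc 1 N).filter (fun i : ℕ => ‖x‖ < a * 4 ^ (-(i:ℝ))) with hS_def
      set m := S.max' hS with hm_def
      have hm : m ∈ S := S.max'_mem hS
      have hmb : ‖x‖ < a * 4 ^ (-(m:ℝ)) := (Finset.mem_filter.mp hm).2
      have hsum : f x ≤ C₀ * b ^ m := by
        rw [hf_eq x]
        calc ∑ i ∈ S, b ^ i ≤ ∑ i ∈ Finset.Icc 1 m, b ^ i :=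
            Finset.sum_le_sum_of_subset_of_nonneg
              (fun i hi => Finset.mem_Icc.mpr
                ⟨(Finset.mem_Icc.mp (Finset.mem_filter.mp hi).1).1, S.le_max' i hi⟩)
              (fun i _ _ => by positivity)
          _ ≤ C₀ * b ^ m := hgeom m
      have h4m : (4:ℝ) ^ (m:ℕ) < a / ‖x‖ := by
        have hneg : (4:ℝ) ^ (-(m:ℝ)) = ((4:ℝ) ^ (m:ℕ))⁻¹ := by
          rw [Real.rpow_neg (by norm_num), Real.rpow_natCast]
        rw [hneg] at hmb
        rw [lt_div_iff₀ hxn]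
        have h4pos : (0:ℝ) < (4:ℝ) ^ (m:ℕ) := by positivity
        calc (4:ℝ) ^ (m:ℕ) * ‖x‖ < (4:ℝ) ^ (m:ℕ) * (a * ((4:ℝ) ^ (m:ℕ))⁻¹) :=
              mul_lt_mul_of_pos_left hmb h4pos
          _ = a := by field_simp
      have hbm : b ^ m ≤ (a/‖x‖) ^ c := by
        have hbme : b ^ m = ((4:ℝ) ^ (m:ℕ)) ^ c := by
          rw [hb_def, ← Real.rpow_natCast ((4:ℝ)^c) m, ← Real.rpow_natCast (4:ℝ) m,
            ← Real.rpow_mul (by norm_num : (0:ℝ) ≤ 4),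
            ← Real.rpow_mul (by norm_num : (0:ℝ) ≤ 4), mul_comm]
        rw [hbme]
        exact Real.rpow_le_rpow (by positivity) h4m.le hc.le
      have htlt : t < C₀ * (a/‖x‖) ^ c := by
        have h5 : C₀ * b ^ m ≤ C₀ * (a/‖x‖) ^ c := mul_le_mul_of_nonneg_left hbm hC₀pos.le
        linarith
      have h1 : t / C₀ < (a/‖x‖) ^ c := by
        rw [div_lt_iff₀ hC₀pos]
        calc t < C₀ * (a/‖x‖) ^ c := htlt
          _ = (a/‖x‖) ^ c * C₀ := mul_comm _ _
      have h2 : (t/C₀) ^ (1/c) < a/‖x‖ := by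
        have hax : 0 ≤ a / ‖x‖ := by positivity
        have h6 := Real.rpow_lt_rpow (le_of_lt (div_pos ht hC₀pos)) h1
          (by positivity : (0:ℝ) < 1/c)
        rwa [← Real.rpow_mul hax, mul_one_div, div_self hc.ne', Real.rpow_one] at h6
      rw [mem_ball_zero_iff, lt_div_iff₀ hy]
      calc ‖x‖ * (t/C₀) ^ (1/c) < ‖x‖ * (a/‖x‖) := mul_lt_mul_of_pos_left h2 hxn
        _ = a := by field_simp
  have hempty : ∀ t : ℝ, C₀ * b ^ N ≤ t → {x | t < |f x|} = ∅ := by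
    intro t htc
    ext x
    simp only [mem_setOf_eq, mem_empty_iff_false, iff_false, not_lt, habs]
    linarith [hfle x]
  -- integrand bounds
  set T : ℝ := max 1 (C₀ * b ^ N) with hT_def
  have hT1 : (1:ℝ) ≤ T := le_max_left _ _
  have hlogT0 : 0 ≤ Real.log T := Real.log_nonneg hT1
  -- unfold the norm
  simp only [lorentzNorm]
  set g : ℝ → ℝ≥0∞ := fun t =>
    (ENNReal.ofReal t * (volume {x | t < |f x|}) ^ (1 / p₀)) ^ s * ENNReal.ofReal (1 / t)
    with hg_def
  have hg1 : ∀ t : ℝ, 0 < t → t ≤ 1 → g t ≤ ENNReal.ofReal (B₂ ^ s) := by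
    intro t ht ht1
    have hμ : volume {x | t < |f x|} ≤ ENNReal.ofReal ((a/4)^d * v) := by
      rw [← hvol (a/4) (by positivity)]
      exact measure_mono (hsub1 t ht)
    calc g t ≤ (ENNReal.ofReal t * (ENNReal.ofReal ((a/4)^d * v)) ^ (1/p₀)) ^ s *
          ENNReal.ofReal (1/t) := by
          apply mul_le_mul_left
          apply ENNReal.rpow_le_rpow _ hs0.le
          exact mul_le_mul_right (ENNReal.rpow_le_rpow hμ hp0'.le) _
      _ = ENNReal.ofReal ((t * B₂)^s * (1/t)) := by
          rw [ENNReal.ofReal_rpow_of_nonneg (by positivity) hp0'.le, ← hB2_def,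
            ← ENNReal.ofReal_mul ht.le, ENNReal.ofReal_rpow_of_nonneg (by positivity) hs0.le,
            ← ENNReal.ofReal_mul (by positivity)]
      _ ≤ ENNReal.ofReal (B₂ ^ s) := by
          apply ENNReal.ofReal_le_ofReal
          have hts : (t * B₂)^s = t^s * B₂^s := Real.mul_rpow ht.le hB2nn
          have hts1 : t^s * (1/t) = t^(s-1) := by
            rw [Real.rpow_sub ht, Real.rpow_one]; ring
          have hle1 : t^(s-1) ≤ 1 := Real.rpow_le_one ht.le ht1 (by linarith)
          calc (t * B₂)^s * (1/t) = B₂^s * (t^s * (1/t)) := by rw [hts]; ring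
            _ = B₂^s * t^(s-1) := by rw [hts1]
            _ ≤ B₂^s * 1 := mul_le_mul_of_nonneg_left hle1 hB2s
            _ = B₂^s := mul_one _
  have hg2 : ∀ t : ℝ, 1 < t → g t ≤ ENNReal.ofReal (B ^ s) * ENNReal.ofReal (1/t) := by
    intro t ht
    have ht0 : 0 < t := lt_trans one_pos ht
    set X : ℝ := (t/C₀) ^ (1/c) with hX_def
    have hX0 : 0 < X := Real.rpow_pos_of_pos (div_pos ht0 hC₀pos) _
    have hμ : volume {x | t < |f x|} ≤ ENNReal.ofReal ((a/X)^d * v) := by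
      rw [← hvol (a/X) (by positivity)]
      exact measure_mono (hsub2 t ht0)
    have hXc : X ^ c = t / C₀ := by
      rw [hX_def, ← Real.rpow_mul (le_of_lt (div_pos ht0 hC₀pos)), one_div_mul_cancel hc.ne',
        Real.rpow_one]
    have hreal : t * ((a/X)^d * v) ^ (1/p₀) = B := by
      have h1 : ((a/X)^d * v) ^ (1/p₀) = (a/X) ^ ((d:ℝ)*(1/p₀)) * v ^ (1/p₀) := by
        rw [Real.mul_rpow (by positivity) hv0, ← Real.rpow_natCast (a/X) d,
          ← Real.rpow_mul (by positivity : (0:ℝ) ≤ a/X)]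
      have h2 : (d:ℝ)*(1/p₀) = c := by rw [hc_def]; ring
      have h3 : (a/X) ^ c = a ^ c / (t/C₀) := by
        rw [Real.div_rpow ha.le hX0.le, hXc]
      rw [h1, h2, h3, hB_def]
      field_simp
    calc g t ≤ (ENNReal.ofReal t * (ENNReal.ofReal ((a/X)^d * v)) ^ (1/p₀)) ^ s *
          ENNReal.ofReal (1/t) := by
          apply mul_le_mul_left
          apply ENNReal.rpow_le_rpow _ hs0.le
          exact mul_le_mul_right (ENNReal.rpow_le_rpow hμ hp0'.le) _
      _ = ENNReal.ofReal (B ^ s) * ENNReal.ofReal (1/t) := by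
          rw [ENNReal.ofReal_rpow_of_nonneg (by positivity) hp0'.le,
            ← ENNReal.ofReal_mul ht0.le, hreal,
            ENNReal.ofReal_rpow_of_nonneg hBnn hs0.le]
  have hg0 : ∀ t : ℝ, T < t → g t = 0 := by
    intro t htT
    have he : {x | t < |f x|} = ∅ := hempty t (le_trans (le_max_right _ _) htT.le)
    rw [hg_def]
    simp only [he, measure_empty, ENNReal.zero_rpow_of_pos hp0', mul_zero,
      ENNReal.zero_rpow_of_pos hs0, zero_mul]
  set G : ℝ → ℝ≥0∞ := fun t =>
    (Ioc (0:ℝ) 1).indicator (fun _ => ENNReal.ofReal (B₂^s)) t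
      + (Ioc (1:ℝ) T).indicator (fun u => ENNReal.ofReal (B^s) * ENNReal.ofReal (1/u)) t
    with hG_def
  have hgG : ∀ t ∈ Ioi (0:ℝ), g t ≤ G t := by
    intro t ht
    rw [mem_Ioi] at ht
    rcases le_or_gt t 1 with h1 | h1
    · have hmem : (Ioc (0:ℝ) 1).indicator (fun _ => ENNReal.ofReal (B₂^s)) t
          = ENNReal.ofReal (B₂^s) := indicator_of_mem (mem_Ioc.mpr ⟨ht, h1⟩) _
      calc g t ≤ ENNReal.ofReal (B₂^s) := hg1 t ht h1
        _ ≤ G t := by rw [hG_def]; simp only; rw [hmem]; exact le_self_add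
    · rcases le_or_gt t T with h2 | h2
      · have hmem : (Ioc (1:ℝ) T).indicator
            (fun u => ENNReal.ofReal (B^s) * ENNReal.ofReal (1/u)) t
            = ENNReal.ofReal (B^s) * ENNReal.ofReal (1/t) := indicator_of_mem (mem_Ioc.mpr ⟨h1, h2⟩) _
        calc g t ≤ ENNReal.ofReal (B^s) * ENNReal.ofReal (1/t) := hg2 t h1
          _ ≤ G t := by rw [hG_def]; simp only; rw [hmem]; exact le_add_self
      · rw [hg0 t h2]; exact zero_le
  have hI1 : ∫⁻ t in Ioi (0:ℝ),
      (Ioc (0:ℝ) 1).indicator (fun _ => ENNReal.ofReal (B₂^s)) t = ENNReal.ofReal (B₂^s) := by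
    rw [lintegral_indicator measurableSet_Ioc, Measure.restrict_restrict measurableSet_Ioc]
    have h : Ioc (0:ℝ) 1 ∩ Ioi 0 = Ioc 0 1 := inter_eq_left.mpr Ioc_subset_Ioi_self
    rw [h, setLIntegral_const, Real.volume_Ioc]
    norm_num
  have hIlog : ∫⁻ t in Ioc (1:ℝ) T, ENNReal.ofReal (1/t) = ENNReal.ofReal (Real.log T) := by
    have hcont : ContinuousOn (fun t : ℝ => 1/t) (Icc 1 T) := by
      apply ContinuousOn.div continuousOn_const continuousOn_id
      intro x hx
      exact ne_of_gt (lt_of_lt_of_le one_pos hx.1)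
    have hInt : IntegrableOn (fun t : ℝ => 1/t) (Ioc 1 T) :=
      hcont.integrableOn_Icc.mono_set Ioc_subset_Icc_self
    rw [← ofReal_integral_eq_lintegral_ofReal hInt
      ((ae_restrict_iff' measurableSet_Ioc).mpr (ae_of_all _ (fun x hx => by
        have : (0:ℝ) < x := lt_of_lt_of_le one_pos hx.1.le
        positivity)))]
    congr 1
    rw [← intervalIntegral.integral_of_le hT1, integral_one_div, div_one]
    rw [Set.uIcc_of_le hT1]
    intro h
    exact absurd h.1 (by norm_num)
  have hI2 : ∫⁻ t in Ioi (0:ℝ),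
      (Ioc (1:ℝ) T).indicator (fun u => ENNReal.ofReal (B^s) * ENNReal.ofReal (1/u)) t
      = ENNReal.ofReal (B^s) * ENNReal.ofReal (Real.log T) := by
    rw [lintegral_indicator measurableSet_Ioc, Measure.restrict_restrict measurableSet_Ioc]
    have h : Ioc (1:ℝ) T ∩ Ioi 0 = Ioc 1 T :=
      inter_eq_left.mpr (fun x hx => lt_trans one_pos hx.1)
    rw [h, lintegral_const_mul' _ _ ENNReal.ofReal_ne_top, hIlog]
  have hGmeas : Measurable fun t : ℝ =>
      (Ioc (0:ℝ) 1).indicator (fun _ => ENNReal.ofReal (B₂^s)) t :=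
    measurable_const.indicator measurableSet_Ioc
  have hGint : ∫⁻ t in Ioi (0:ℝ), G t
      = ENNReal.ofReal (B₂^s) + ENNReal.ofReal (B^s) * ENNReal.ofReal (Real.log T) := by
    rw [hG_def]
    rw [lintegral_add_left hGmeas, hI1, hI2]
  have hlogT : Real.log T ≤ Real.log C₀ + c * Real.log 4 * N := by
    have hcN : 0 ≤ c * Real.log 4 * N := by positivity
    rcases max_cases (1:ℝ) (C₀ * b ^ N) with ⟨hmax, _⟩ | ⟨hmax, _⟩
    · rw [hT_def, hmax, Real.log_one]; linarith
    · rw [hT_def, hmax, Real.log_mul hC₀pos.ne' (pow_pos hb0 N).ne', Real.log_pow,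
        hb_def, Real.log_rpow (by norm_num)]
      have : (N:ℝ) * (c * Real.log 4) = c * Real.log 4 * N := by ring
      linarith [this.le]
  have hAbound : B₂^s + B^s * Real.log T ≤ A * max 1 (N:ℝ) := by
    have hmax1 : (1:ℝ) ≤ max 1 (N:ℝ) := le_max_left _ _
    have hmaxN : (N:ℝ) ≤ max 1 (N:ℝ) := le_max_right _ _
    have hmax0 : (0:ℝ) ≤ max 1 (N:ℝ) := by linarith
    have h1 : B^s * Real.log T ≤ B^s * Real.log C₀ + B^s * (c * Real.log 4) * N := by
      have := mul_le_mul_of_nonneg_left hlogT hBs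
      nlinarith
    have e1 : B₂^s ≤ B₂^s * max 1 (N:ℝ) := le_mul_of_one_le_right hB2s hmax1
    have e2 : B^s * Real.log C₀ ≤ B^s * Real.log C₀ * max 1 (N:ℝ) :=
      le_mul_of_one_le_right (mul_nonneg hBs hlogC₀) hmax1
    have e3 : B^s * (c * Real.log 4) * N ≤ B^s * (c * Real.log 4) * max 1 (N:ℝ) :=
      mul_le_mul_of_nonneg_left hmaxN (mul_nonneg hBs (by positivity))
    have : A * max 1 (N:ℝ) = B₂^s * max 1 (N:ℝ) + B^s * Real.log C₀ * max 1 (N:ℝ)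
        + B^s * (c * Real.log 4) * max 1 (N:ℝ) := by rw [hA_def]; ring
    linarith
  rcases Nat.eq_zero_or_pos N with hN0 | hN1
  · -- N = 0 : the function is zero and the norm vanishes
    have hfz : ∀ x, f x = 0 := by
      intro x
      rw [hf_def]
      simp [hN0]
    have hint0 : ∫⁻ t in Ioi (0:ℝ), g t = 0 := by
      apply le_antisymm _ zero_le
      have : ∀ t ∈ Ioi (0:ℝ), g t ≤ 0 := by
        intro t ht
        rw [mem_Ioi] at ht
        have he : {x | t < |f x|} = ∅ := by
          ext x
          simp only [mem_setOf_eq, mem_empty_iff_false, iff_false, not_lt, hfz, abs_zero]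
          exact ht.le
        rw [hg_def]
        simp only [he, measure_empty, ENNReal.zero_rpow_of_pos hp0', mul_zero,
          ENNReal.zero_rpow_of_pos hs0, zero_mul, le_refl]
      calc ∫⁻ t in Ioi (0:ℝ), g t ≤ ∫⁻ _ in Ioi (0:ℝ), 0 :=
          lintegral_mono_ae ((ae_restrict_iff' measurableSet_Ioi).mpr (ae_of_all _ this))
        _ = 0 := lintegral_zero
    rw [hint0, ENNReal.zero_rpow_of_pos hs0', mul_zero]
    exact zero_le
  · have hmaxN : max 1 (N:ℝ) = (N:ℝ) := max_eq_right (by exact_mod_cast hN1)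
    calc ENNReal.ofReal (p₀ ^ (1/s)) * (∫⁻ t in Ioi (0:ℝ), g t) ^ (1/s)
        ≤ ENNReal.ofReal (p₀ ^ (1/s)) *
          (ENNReal.ofReal (B₂^s) + ENNReal.ofReal (B^s) * ENNReal.ofReal (Real.log T)) ^ (1/s) := by
          apply mul_le_mul_right
          apply ENNReal.rpow_le_rpow _ hs0'.le
          calc ∫⁻ t in Ioi (0:ℝ), g t ≤ ∫⁻ t in Ioi (0:ℝ), G t :=
              lintegral_mono_ae ((ae_restrict_iff' measurableSet_Ioi).mpr (ae_of_all _ hgG))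
            _ = _ := hGint
      _ ≤ ENNReal.ofReal (p₀ ^ (1/s)) * (ENNReal.ofReal (A * max 1 (N:ℝ))) ^ (1/s) := by
          apply mul_le_mul_right
          apply ENNReal.rpow_le_rpow _ hs0'.le
          rw [← ENNReal.ofReal_mul hBs, ← ENNReal.ofReal_add hB2s (mul_nonneg hBs hlogT0)]
          exact ENNReal.ofReal_le_ofReal hAbound
      _ = ENNReal.ofReal (p₀ ^ (1/s) * (A * (N:ℝ)) ^ (1/s)) := by
          rw [hmaxN, ENNReal.ofReal_rpow_of_nonneg (by positivity) hs0'.le,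
            ← ENNReal.ofReal_mul (by positivity)]
      _ ≤ ENNReal.ofReal ((p₀ ^ (1/s) * A ^ (1/s) + 1) * (N:ℝ) ^ (1/s)) := by
          apply ENNReal.ofReal_le_ofReal
          rw [Real.mul_rpow hA0 (Nat.cast_nonneg N)]
          have hN : (0:ℝ) ≤ (N:ℝ)^(1/s) := Real.rpow_nonneg (Nat.cast_nonneg N) _
          nlinarith [Real.rpow_nonneg hp0.le (1/s), Real.rpow_nonneg hA0 (1/s)]
end
end
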